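/- arXiv:math/0703629 — 2 statements merged into one kernel-verified Lean document; each statement's English description precedes it below -/
import Mathlib

section
/- Let (V, ν, τ, τ*) be a probabilistic pseudo-normed space and C := {p ∈ V : ν_p = ε₀}. Then C is a linear subspace of V: it is closed under addition and under multiplication by arbitrary real scalars. -/
open Filter Topology Set

/-- A distribution function in `Δ⁺`: nondecreasing, left-continuous,
vanishing on `(-∞,0]` and bounded by `1`. -/
structure DistFun where
  toFun : ℝ → ℝ
  mono' : Monotone toFun
  leftCont' : ∀ x, Filter.Tendsto toFun (nhdsWithin x (Set.Iio x)) (nhds (toFun x))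
  zero' : ∀ x ≤ (0 : ℝ), toFun x = 0
  le_one' : ∀ x, toFun x ≤ 1

instance : CoeFun DistFun (fun _ => ℝ → ℝ) := ⟨DistFun.toFun⟩

/-- Pointwise order on `Δ⁺`. -/
instance : LE DistFun := ⟨fun F G => ∀ x, F.toFun x ≤ G.toFun x⟩

/-- The unit step distribution function `ε_a` for `a ≥ 0`. -/
noncomputable def unitStep (a : ℝ) (_ha : 0 ≤ a) : DistFun where
  toFun x := if x ≤ a then 0 else 1
  mono' := by
    intro x y hxy
    by_cases hx : x ≤ a <;> by_cases hy : y ≤ a <;> simp [hx, hy] <;> linarith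
  leftCont' := by
    intro x
    by_cases hx : x ≤ a
    · have h : (fun y => if y ≤ a then (0:ℝ) else 1) =ᶠ[nhdsWithin x (Set.Iio x)]
          fun _ => (0:ℝ) := by
        filter_upwards [self_mem_nhdsWithin] with y hy
        exact if_pos ((le_of_lt hy).trans hx)
      simpa [if_pos hx] using (tendsto_const_nhds (α := ℝ)).congr' h.symm
    · have hax : a < x := not_le.mp hx
      have h : (fun y => if y ≤ a then (0:ℝ) else 1) =ᶠ[nhdsWithin x (Set.Iio x)]
          fun _ => (1:ℝ) := by
        filter_upwards [(eventually_gt_nhds hax).filter_mono nhdsWithin_le_nhds] with y hy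
        exact if_neg (not_le.mpr hy)
      simpa [if_neg hx] using (tendsto_const_nhds (α := ℝ)).congr' h.symm
  zero' := fun x hx => if_pos (hx.trans _ha)
  le_one' := by intro x; by_cases h : x ≤ a <;> simp [h]

/-- The maximal element `ε₀` of `Δ⁺`. -/
noncomputable def eps0 : DistFun := unitStep 0 le_rfl

/-- The one-sided Lévy condition `(F,G;h)`. -/
def levyCond (F G : DistFun) (h : ℝ) : Prop :=
  ∀ x : ℝ, -(1/h) < x → x < 1/h →
    F.toFun (x - h) - h ≤ G.toFun x ∧ G.toFun x ≤ F.toFun (x + h) + h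

/-- The Sibley (modified Lévy) metric on `Δ⁺`. -/
noncomputable def sibley (F G : DistFun) : ℝ :=
  sInf {h : ℝ | 0 < h ∧ h ≤ 1 ∧ levyCond F G h ∧ levyCond G F h}

/-- Triangle function: associative, commutative, nondecreasing binary
operation on `Δ⁺` with identity `ε₀`. -/
structure IsTriangleFun (τ : DistFun → DistFun → DistFun) : Prop where
  comm : ∀ F G, τ F G = τ G F
  assoc : ∀ F G H, τ (τ F G) H = τ F (τ G H)
  mono : ∀ F G H, F ≤ G → τ F H ≤ τ G H
  ident : ∀ F, τ F eps0 = F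

/-- Continuity of a triangle function w.r.t. the Sibley metric (sequential form). -/
def TriCont (τ : DistFun → DistFun → DistFun) : Prop :=
  ∀ (F G : ℕ → DistFun) (F₀ G₀ : DistFun),
    Filter.Tendsto (fun n => sibley (F n) F₀) Filter.atTop (nhds 0) →
    Filter.Tendsto (fun n => sibley (G n) G₀) Filter.atTop (nhds 0) →
    Filter.Tendsto (fun n => sibley (τ (F n) (G n)) (τ F₀ G₀)) Filter.atTop (nhds 0)

/-- Sup-continuity of a triangle function: `τ (sup_i F_i) G = sup_i τ (F_i) G`
(pointwise). -/
def SupCont (τ : DistFun → DistFun → DistFun) : Prop :=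
  ∀ {ι : Type} [Nonempty ι] (F : ι → DistFun) (S G : DistFun),
    (∀ x, S.toFun x = ⨆ i, (F i).toFun x) →
    ∀ x, (τ S G).toFun x = ⨆ i, (τ (F i) G).toFun x

/-- Domination `τ₁ ≫ τ₂` of triangle functions. -/
def Dominates (τ₁ τ₂ : DistFun → DistFun → DistFun) : Prop :=
  ∀ F₁ F₂ G₁ G₂, τ₂ (τ₁ F₁ F₂) (τ₁ G₁ G₂) ≤ τ₁ (τ₂ F₁ G₁) (τ₂ F₂ G₂)

/-- A probabilistic pseudo-normed space `(V, ν, τ, τ*)`. -/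
structure IsPPNSpace {V : Type*} [AddCommGroup V] [Module ℝ V]
    (ν : V → DistFun) (τ τs : DistFun → DistFun → DistFun) : Prop where
  tri : IsTriangleFun τ
  tri_s : IsTriangleFun τs
  cont : TriCont τ
  cont_s : TriCont τs
  tau_le : ∀ F G, τ F G ≤ τs F G
  N1' : ν 0 = eps0
  N2 : ∀ p, ν (-p) = ν p
  N3 : ∀ p q, τ (ν p) (ν q) ≤ ν (p + q)
  N4 : ∀ (p : V) (α : ℝ), 0 ≤ α → α ≤ 1 →
    ν p ≤ τs (ν (α • p)) (ν ((1 - α) • p))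

/-- A probabilistic normed space `(V, ν, τ, τ*)`. -/
structure IsPNSpace {V : Type*} [AddCommGroup V] [Module ℝ V]
    (ν : V → DistFun) (τ τs : DistFun → DistFun → DistFun)
    extends IsPPNSpace ν τ τs : Prop where
  N1 : ∀ p, ν p = eps0 ↔ p = 0

/-- The strong topology of a PN space, generated by the strong neighbourhoods
`N_p(t) = {q : ν_{q-p}(t) > 1 - t}`. -/
def strongTop {V : Type*} [AddCommGroup V] (ν : V → DistFun) : TopologicalSpace V :=
  TopologicalSpace.generateFrom
    {S | ∃ (p : V) (t : ℝ), 0 < t ∧ S = {q | 1 - t < (ν (q - p)).toFun t}}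

/-- A set is closed in the strong topology. -/
def StrongClosed {V : Type*} [AddCommGroup V] (ν : V → DistFun) (S : Set V) : Prop :=
  @IsClosed V (strongTop ν) S

/-- A strong Cauchy sequence. -/
def StrongCauchy {V : Type*} [AddCommGroup V] (ν : V → DistFun) (p : ℕ → V) : Prop :=
  ∀ t : ℝ, 0 < t → ∃ N : ℕ, ∀ m n, N ≤ m → N ≤ n → 1 - t < (ν (p n - p m)).toFun t

/-- Strong convergence of a sequence to a point. -/
def StrongConv {V : Type*} [AddCommGroup V] (ν : V → DistFun) (p : ℕ → V) (x : V) : Prop :=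
  ∀ t : ℝ, 0 < t → ∃ N : ℕ, ∀ n, N ≤ n → 1 - t < (ν (p n - x)).toFun t

/-- Strong completeness. -/
def StrongComplete {V : Type*} [AddCommGroup V] (ν : V → DistFun) : Prop :=
  ∀ p : ℕ → V, StrongCauchy ν p → ∃ x, StrongConv ν p x

lemma DistFun.ext' {F G : DistFun} (h : ∀ x, F.toFun x = G.toFun x) : F = G := by
  cases F; cases G
  simp only [DistFun.mk.injEq]
  exact funext h

lemma le_eps0 (F : DistFun) : F ≤ eps0 := by
  intro x
  simp only [eps0, unitStep]
  by_cases hx : x ≤ 0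
  · simp [hx, F.zero' x hx]
  · simp [hx, F.le_one' x]

lemma eq_eps0_of_ge {F : DistFun} (h : eps0 ≤ F) : F = eps0 :=
  DistFun.ext' fun x => le_antisymm (le_eps0 F x) (h x)

theorem kernel_is_subspace {V : Type*} [AddCommGroup V] [Module ℝ V]
    (ν : V → DistFun) (τ τs : DistFun → DistFun → DistFun)
    (h : IsPPNSpace ν τ τs) :
    (∀ p q : V, ν p = eps0 → ν q = eps0 → ν (p + q) = eps0) ∧
    (∀ (α : ℝ) (p : V), ν p = eps0 → ν (α • p) = eps0) := by
  have hadd : ∀ p q : V, ν p = eps0 → ν q = eps0 → ν (p + q) = eps0 := by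
    intro p q hp hq
    apply eq_eps0_of_ge
    have h3 := h.N3 p q
    rwa [hp, hq, h.tri.ident] at h3
  refine ⟨hadd, ?_⟩
  have hsmall : ∀ (α : ℝ) (p : V), 0 ≤ α → α ≤ 1 → ν p = eps0 → ν (α • p) = eps0 := by
    intro α p h0 h1 hp
    apply eq_eps0_of_ge
    have hN4 := h.N4 p α h0 h1
    rw [hp] at hN4
    have hmono : τs (ν ((1 - α) • p)) (ν (α • p)) ≤ τs eps0 (ν (α • p)) :=
      h.tri_s.mono _ _ _ (le_eps0 _)
    rw [h.tri_s.comm (ν ((1 - α) • p)) (ν (α • p)), h.tri_s.comm eps0, h.tri_s.ident] at hmono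
    intro x
    exact le_trans (hN4 x) (hmono x)
  have hnat : ∀ (n : ℕ) (p : V), ν p = eps0 → ν ((n : ℝ) • p) = eps0 := by
    intro n p hp
    induction n with
    | zero => rw [Nat.cast_zero, zero_smul]; exact h.N1'
    | succ n ih =>
      have e : ((n + 1 : ℕ) : ℝ) • p = (n : ℝ) • p + p := by
        push_cast; rw [add_smul, one_smul]
      rw [e]; exact hadd _ _ ih hp
  have hnonneg : ∀ (α : ℝ) (p : V), 0 ≤ α → ν p = eps0 → ν (α • p) = eps0 := by
    intro α p hα hp
    set n : ℕ := ⌈α⌉₊ + 1 with hn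
    have hnpos : (0 : ℝ) < n := by positivity
    have h1 : α / n ≤ 1 := by
      rw [div_le_one hnpos]
      calc α ≤ ⌈α⌉₊ := Nat.le_ceil α
        _ ≤ (n : ℝ) := by exact_mod_cast Nat.le_succ _
    have h0 : 0 ≤ α / n := div_nonneg hα hnpos.le
    have key := hsmall (α / n) ((n : ℝ) • p) h0 h1 (hnat n p hp)
    rwa [smul_smul, div_mul_cancel₀ _ hnpos.ne'] at key
  intro α p hp
  rcases le_or_gt 0 α with hα | hα
  · exact hnonneg α p hα hp
  · have e : α • p = -((-α) • p) := by rw [neg_smul, neg_neg]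
    rw [e, h.N2]
    exact hnonneg (-α) p (by linarith) hp
end

section
/- Let (V, ν, τ, τ*) be a PN space with τ, τ* sup-continuous and W a closed subspace with quotient norm ν̄_{p+W} = sup_{q∈W} ν_{p+q}. For every p ∈ V and ε > 0, there exists p' ∈ V with p'+W = p+W and d_S(ν_{p'}, ε₀) < d_S(ν̄_{p+W}, ε₀) + ε. -/
open Filter Topology Set

lemma eps0_apply (x : ℝ) : eps0.toFun x = if x ≤ 0 then 0 else 1 := rfl

lemma distfun_nonneg (F : DistFun) (x : ℝ) : 0 ≤ F.toFun x := by
  rcases le_or_gt x 0 with hx | hx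
  · exact (F.zero' x hx).ge
  · calc (0:ℝ) = F.toFun 0 := (F.zero' 0 le_rfl).symm
      _ ≤ F.toFun x := F.mono' hx.le

lemma mem_sibley_set (F : DistFun) (h : ℝ) (h0 : 0 < h) (h1 : h ≤ 1)
    (hF : ∀ y, h < y → 1 - h ≤ F.toFun y) :
    0 < h ∧ h ≤ 1 ∧ levyCond F eps0 h ∧ levyCond eps0 F h := by
  refine ⟨h0, h1, ?_, ?_⟩
  · intro x _ _
    refine ⟨?_, ?_⟩
    · rcases le_or_gt x 0 with hx | hx
      · rw [eps0_apply, if_pos hx, F.zero' _ (by linarith)]; linarith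
      · rw [eps0_apply, if_neg (not_le.mpr hx)]
        have := F.le_one' (x - h); linarith
    · rcases le_or_gt x 0 with hx | hx
      · rw [eps0_apply, if_pos hx]
        have := distfun_nonneg F (x + h); linarith
      · rw [eps0_apply, if_neg (not_le.mpr hx)]
        have := hF (x + h) (by linarith); linarith
  · intro x _ _
    refine ⟨?_, ?_⟩
    · rcases le_or_gt (x - h) 0 with hx | hx
      · rw [eps0_apply, if_pos hx]
        have := distfun_nonneg F x; linarith
      · rw [eps0_apply, if_neg (not_le.mpr hx)]
        have := hF x (by linarith); linarith
    · rcases le_or_gt (x + h) 0 with hx | hx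
      · rw [eps0_apply, if_pos hx, F.zero' _ (by linarith)]; linarith
      · rw [eps0_apply, if_neg (not_le.mpr hx)]
        have := F.le_one' x; linarith

lemma sibley_set_lower (G : DistFun) (h : ℝ) (h0 : 0 < h) (h1 : h ≤ 1)
    (hlev : levyCond eps0 G h) : ∀ y, h < y → 1 - h ≤ G.toFun y := by
  intro y hy
  rcases eq_or_lt_of_le h1 with rfl | hlt
  · have := distfun_nonneg G y; linarith
  · have hinv : h < 1 / h := by
      rw [lt_div_iff₀ h0]; nlinarith
    set x := min y ((h + 1/h)/2) with hxdef
    have hxh : h < x := lt_min hy (by linarith)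
    have hx2 : x < 1/h := lt_of_le_of_lt (min_le_right _ _) (by linarith)
    have hx1 : -(1/h) < x := by
      have : (0:ℝ) < 1/h := by positivity
      linarith
    have := (hlev x hx1 hx2).1
    rw [eps0_apply, if_neg (not_le.mpr (by linarith : (0:ℝ) < x - h))] at this
    have hxy : G.toFun x ≤ G.toFun y := G.mono' (min_le_left _ _)
    linarith

theorem quotient_sibley_approx {V : Type*} [AddCommGroup V] [Module ℝ V]
    (ν : V → DistFun) (τ τs : DistFun → DistFun → DistFun)
    (h : IsPNSpace ν τ τs) (hτ : SupCont τ) (hτs : SupCont τs)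
    (W : Submodule ℝ V)
    (hW : StrongClosed ν (W : Set V))
    (ν' : V ⧸ W → DistFun)
    (hν' : ∀ (p : V) (x : ℝ),
      (ν' (W.mkQ p)).toFun x = ⨆ q : W, (ν (p + (q : V))).toFun x)
    (p : V) (ε : ℝ) (hε : 0 < ε) :
    ∃ p' : V, W.mkQ p' = W.mkQ p ∧
      sibley (ν p') eps0 < sibley (ν' (W.mkQ p)) eps0 + ε := by
  classical
  set G := ν' (W.mkQ p) with hG
  set S : Set ℝ := {t | 0 < t ∧ t ≤ 1 ∧ levyCond G eps0 t ∧ levyCond eps0 G t} with hS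
  have hone : (1:ℝ) ∈ S := mem_sibley_set G 1 one_pos le_rfl
      (fun y _ => by have := distfun_nonneg G y; linarith)
  have hbdd : BddBelow S := ⟨0, fun x hx => hx.1.le⟩
  have hd : sibley G eps0 = sInf S := rfl
  obtain ⟨t, htS, htlt⟩ := exists_lt_of_csInf_lt ⟨1, hone⟩
    (lt_add_of_pos_right (sInf S) (by linarith : (0:ℝ) < ε/4))
  obtain ⟨t0, t1, _, hlev⟩ := htS
  have hy : 1 - t ≤ G.toFun (t + ε/4) :=
    sibley_set_lower G t t0 t1 hlev _ (by linarith)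
  have hsup : G.toFun (t + ε/4) = ⨆ q : W, (ν (p + (q:V))).toFun (t + ε/4) := hν' p _
  haveI : Nonempty W := ⟨0⟩
  have hbd : BddAbove (Set.range fun q : W => (ν (p + (q:V))).toFun (t + ε/4)) :=
    ⟨1, by rintro _ ⟨q, rfl⟩; exact (ν (p + q)).le_one' _⟩
  have hlt2 : 1 - (t + ε/2) < ⨆ q : W, (ν (p + (q:V))).toFun (t + ε/4) := by
    rw [← hsup]; linarith
  obtain ⟨q, hq⟩ := (lt_ciSup_iff hbd).1 hlt2
  refine ⟨p + q, ?_, ?_⟩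
  · have hq0 : W.mkQ (q : V) = 0 := (Submodule.Quotient.mk_eq_zero W).2 q.2
    rw [map_add, hq0, add_zero]
  · set t' := min (t + ε/2) 1 with ht'
    have hmem : 0 < t' ∧ t' ≤ 1 ∧ levyCond (ν (p+q)) eps0 t' ∧ levyCond eps0 (ν (p+q)) t' := by
      refine mem_sibley_set _ _ (lt_min (by linarith) one_pos) (min_le_right _ _) ?_
      intro z hz
      rcases le_total (t + ε/2) 1 with hc | hc
      · rw [ht', min_eq_left hc] at hz ⊢
        have hm : (ν (p+q)).toFun (t + ε/4) ≤ (ν (p+q)).toFun z :=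
          (ν (p+q)).mono' (by linarith)
        linarith
      · rw [ht', min_eq_right hc]
        have := distfun_nonneg (ν (p+q)) z; linarith
    have hle : sibley (ν (p+q)) eps0 ≤ t' :=
      csInf_le ⟨0, fun x hx => hx.1.le⟩ hmem
    have hle2 : t' ≤ t + ε/2 := min_le_left _ _
    rw [hd]
    linarith
end
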